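/- arXiv:2212.00073 — 3 statements merged into one kernel-verified Lean document; each statement's English description precedes it below -/
import Mathlib

section
/- Term formula for the 3n+3^k sequence: for every k ∈ ℕ, every positive integer n and every l ∈ ℕ, let m = #{i : 0 ≤ i < l and g_k^i(n) is odd}, and for each index i < l with g_k^i(n) odd let o_i = #{j : i < j < l and g_k^j(n) is odd} and e_i = #{j : 0 ≤ j < i and g_k^j(n) is even}. Then 2^{l-m} · g_k^l(n) = 3^m · n + 3^k · Σ_{i < l, g_k^i(n) odd} 3^{o_i} · 2^{e_i}. -/
open Finset

/-- The generalized Collatz map `g k` : halve if even, `3n + 3^k` if odd. -/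
def g (k : ℕ) (n : ℕ) : ℕ := if n % 2 = 0 then n / 2 else 3 * n + 3 ^ k

theorem term_formula (k n l : ℕ) (hn : 0 < n) :
    2 ^ (l - ((Finset.range l).filter (fun i => Odd ((g k)^[i] n))).card) * (g k)^[l] n =
      3 ^ ((Finset.range l).filter (fun i => Odd ((g k)^[i] n))).card * n +
      3 ^ k * ∑ i ∈ (Finset.range l).filter (fun i => Odd ((g k)^[i] n)),
        3 ^ ((Finset.Ioo i l).filter (fun j => Odd ((g k)^[j] n))).card *
        2 ^ ((Finset.range i).filter (fun j => Even ((g k)^[j] n))).card := by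
  induction l with
  | zero => simp
  | succ l ih =>
    have hm : ((Finset.range l).filter (fun i => Odd ((g k)^[i] n))).card ≤ l := by
      calc ((Finset.range l).filter (fun i => Odd ((g k)^[i] n))).card
          ≤ (Finset.range l).card := Finset.card_filter_le _ _
        _ = l := Finset.card_range l
    set m := ((Finset.range l).filter (fun i => Odd ((g k)^[i] n))).card with hmdef
    set x := (g k)^[l] n with hxdef
    have hit : (g k)^[l + 1] n = g k x := by
      rw [Function.iterate_succ_apply']
    by_cases h : Odd ((g k)^[l] n)
    · -- odd case
      have hx2 : x % 2 = 1 := Nat.odd_iff.mp h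
      have hg : g k x = 3 * x + 3 ^ k := by
        rw [g, if_neg (by omega)]
      have hfilter : (Finset.range (l + 1)).filter (fun i => Odd ((g k)^[i] n)) =
          insert l ((Finset.range l).filter (fun i => Odd ((g k)^[i] n))) := by
        rw [Finset.range_add_one, Finset.filter_insert, if_pos h]
      have hnotmem : l ∉ (Finset.range l).filter (fun i => Odd ((g k)^[i] n)) := by
        simp
      have hcard : ((Finset.range (l + 1)).filter (fun i => Odd ((g k)^[i] n))).card = m + 1 := by
        rw [hfilter, Finset.card_insert_of_notMem hnotmem]
      -- sum over the inserted set
      have hIool : (Finset.Ioo l (l + 1)).filter (fun j => Odd ((g k)^[j] n)) = ∅ := by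
        have : Finset.Ioo l (l + 1) = ∅ := by
          ext a; simp [Finset.mem_Ioo]
        rw [this, Finset.filter_empty]
      have hsum : ∑ i ∈ (Finset.range (l + 1)).filter (fun i => Odd ((g k)^[i] n)),
            3 ^ ((Finset.Ioo i (l + 1)).filter (fun j => Odd ((g k)^[j] n))).card *
            2 ^ ((Finset.range i).filter (fun j => Even ((g k)^[j] n))).card =
          2 ^ ((Finset.range l).filter (fun j => Even ((g k)^[j] n))).card +
          ∑ i ∈ (Finset.range l).filter (fun i => Odd ((g k)^[i] n)),
            3 * (3 ^ ((Finset.Ioo i l).filter (fun j => Odd ((g k)^[j] n))).card *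
            2 ^ ((Finset.range i).filter (fun j => Even ((g k)^[j] n))).card) := by
        rw [hfilter, Finset.sum_insert hnotmem, hIool]
        simp only [Finset.card_empty, pow_zero, one_mul]
        congr 1
        refine Finset.sum_congr rfl (fun i hi => ?_)
        have hil : i < l := by
          simp only [Finset.mem_filter, Finset.mem_range] at hi
          exact hi.1
        have hIoo : Finset.Ioo i (l + 1) = insert l (Finset.Ioo i l) := by
          ext a; simp [Finset.mem_Ioo]; omega
        have hln : l ∉ (Finset.Ioo i l).filter (fun j => Odd ((g k)^[j] n)) := by
          simp
        rw [hIoo, Finset.filter_insert, if_pos h, Finset.card_insert_of_notMem hln,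
          pow_succ]
        ring
      -- count of evens
      have hE : m + ((Finset.range l).filter (fun j => Even ((g k)^[j] n))).card = l := by
        have h1 := Finset.card_filter_add_card_filter_not
          (s := Finset.range l) (p := fun i => Odd ((g k)^[i] n))
        simp only [Nat.not_odd_iff_even, Finset.card_range] at h1
        exact h1
      obtain ⟨t, ht⟩ : ∃ t, l = m + t := ⟨l - m, by omega⟩
      have hsub1 : l - m = t := by omega
      have hsub2 : l + 1 - (m + 1) = t := by omega
      have hEt : ((Finset.range l).filter (fun j => Even ((g k)^[j] n))).card = t := by omega
      rw [hcard, hsum, hit, hg, hsub2, hEt]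
      rw [hsub1] at ih
      calc 2 ^ t * (3 * x + 3 ^ k) = 3 * (2 ^ t * x) + 3 ^ k * 2 ^ t := by ring
        _ = 3 * (3 ^ m * n + 3 ^ k * ∑ i ∈ (Finset.range l).filter (fun i => Odd ((g k)^[i] n)),
              3 ^ ((Finset.Ioo i l).filter (fun j => Odd ((g k)^[j] n))).card *
              2 ^ ((Finset.range i).filter (fun j => Even ((g k)^[j] n))).card) + 3 ^ k * 2 ^ t := by
            rw [ih]
        _ = 3 ^ (m + 1) * n + 3 ^ k * (2 ^ t +
              ∑ i ∈ (Finset.range l).filter (fun i => Odd ((g k)^[i] n)),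
              3 * (3 ^ ((Finset.Ioo i l).filter (fun j => Odd ((g k)^[j] n))).card *
              2 ^ ((Finset.range i).filter (fun j => Even ((g k)^[j] n))).card)) := by
            rw [pow_succ,
              (Finset.mul_sum ((Finset.range l).filter (fun i => Odd ((g k)^[i] n)))
                (fun i => 3 ^ ((Finset.Ioo i l).filter (fun j => Odd ((g k)^[j] n))).card *
                  2 ^ ((Finset.range i).filter (fun j => Even ((g k)^[j] n))).card) 3).symm]
            ring
    · -- even case
      have hev : Even x := Nat.not_odd_iff_even.mp h
      have hg : g k x = x / 2 := by
        rw [g, if_pos (Nat.even_iff.mp hev)]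
      have hfilter : (Finset.range (l + 1)).filter (fun i => Odd ((g k)^[i] n)) =
          (Finset.range l).filter (fun i => Odd ((g k)^[i] n)) := by
        rw [Finset.range_add_one, Finset.filter_insert, if_neg h]
      have hsum : ∑ i ∈ (Finset.range (l + 1)).filter (fun i => Odd ((g k)^[i] n)),
            3 ^ ((Finset.Ioo i (l + 1)).filter (fun j => Odd ((g k)^[j] n))).card *
            2 ^ ((Finset.range i).filter (fun j => Even ((g k)^[j] n))).card =
          ∑ i ∈ (Finset.range l).filter (fun i => Odd ((g k)^[i] n)),
            3 ^ ((Finset.Ioo i l).filter (fun j => Odd ((g k)^[j] n))).card *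
            2 ^ ((Finset.range i).filter (fun j => Even ((g k)^[j] n))).card := by
        rw [hfilter]
        refine Finset.sum_congr rfl (fun i hi => ?_)
        have hil : i < l := by
          simp only [Finset.mem_filter, Finset.mem_range] at hi
          exact hi.1
        have hIoo : Finset.Ioo i (l + 1) = insert l (Finset.Ioo i l) := by
          ext a; simp [Finset.mem_Ioo]; omega
        rw [hIoo, Finset.filter_insert, if_neg h]
      rw [hsum, hfilter, hit, hg]
      have hsucc : l + 1 - m = (l - m) + 1 := by omega
      have hx : 2 * (x / 2) = x := Nat.two_mul_div_two_of_even hev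
      calc 2 ^ (l + 1 - m) * (x / 2) = 2 ^ (l - m) * (2 * (x / 2)) := by
            rw [hsucc, pow_succ]; ring
        _ = 2 ^ (l - m) * x := by rw [hx]
        _ = _ := ih
end

section
/- Total stopping time equation: for every k ∈ ℕ, every positive integer n and every t ∈ ℕ with g_k^t(n) = 3^k, let m = #{i : 0 ≤ i < t and g_k^i(n) is odd} and S = Σ_{i < t, g_k^i(n) odd} 3^{o_i} · 2^{e_i}, where o_i = #{j : i < j < t and g_k^j(n) is odd} and e_i = #{j : 0 ≤ j < i and g_k^j(n) is even}. Then 2^t · 3^k = 2^m · (3^m · n + 3^k · S). -/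
open Finset

lemma card_filter_range_succ (P : ℕ → Prop) [DecidablePred P] (t : ℕ) :
    ((Finset.range (t+1)).filter P).card
      = (if P 0 then 1 else 0) + ((Finset.range t).filter (fun i => P (i+1))).card := by
  rw [Finset.card_filter, Finset.sum_range_succ', Finset.card_filter, add_comm]

lemma card_filter_Ioo_succ (P : ℕ → Prop) [DecidablePred P] (a b : ℕ) :
    ((Finset.Ioo (a+1) (b+1)).filter P).card
      = ((Finset.Ioo a b).filter (fun i => P (i+1))).card := by
  rw [show Finset.Ioo (a+1) (b+1) = (Finset.Ioo a b).map (addRightEmbedding 1) by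
    rw [Finset.map_add_right_Ioo], Finset.filter_map, Finset.card_map]; rfl

lemma card_filter_Ioo_zero (P : ℕ → Prop) [DecidablePred P] (t : ℕ) :
    ((Finset.Ioo 0 (t+1)).filter P).card
      = ((Finset.range t).filter (fun i => P (i+1))).card := by
  rw [show Finset.Ioo 0 (t+1) = (Finset.range t).map (addRightEmbedding 1) by
    rw [Finset.range_eq_Ico, Finset.map_add_right_Ico]; rfl,
    Finset.filter_map, Finset.card_map]; rfl

lemma sum_filter_range_succ (P : ℕ → Prop) [DecidablePred P] (t : ℕ) (f : ℕ → ℕ) :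
    ∑ i ∈ (Finset.range (t+1)).filter P, f i
      = (if P 0 then f 0 else 0) + ∑ i ∈ (Finset.range t).filter (fun i => P (i+1)), f (i+1) := by
  rw [Finset.sum_filter, Finset.sum_range_succ', Finset.sum_filter, add_comm]

theorem total_stopping_time_eq (k n t : ℕ) (hn : 0 < n) (ht : (g k)^[t] n = 3 ^ k) :
    2 ^ t * 3 ^ k =
      2 ^ ((Finset.range t).filter (fun i => Odd ((g k)^[i] n))).card *
        (3 ^ ((Finset.range t).filter (fun i => Odd ((g k)^[i] n))).card * n +
         3 ^ k * ∑ i ∈ (Finset.range t).filter (fun i => Odd ((g k)^[i] n)),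
           3 ^ ((Finset.Ioo i t).filter (fun j => Odd ((g k)^[j] n))).card *
           2 ^ ((Finset.range i).filter (fun j => Even ((g k)^[j] n))).card) := by
  clear hn
  induction t generalizing n with
  | zero =>
    simp only [Function.iterate_zero_apply] at ht
    subst ht; simp
  | succ t ih =>
    rw [Function.iterate_succ_apply] at ht
    have H := ih (g k n) ht
    rw [sum_filter_range_succ]
    simp only [card_filter_range_succ, card_filter_Ioo_succ, card_filter_Ioo_zero,
      Function.iterate_succ_apply, Function.iterate_zero_apply,
      Finset.range_zero, Finset.filter_empty, Finset.card_empty, pow_zero, mul_one]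
    rcases Nat.even_or_odd n with he | ho
    · have hne : ¬ Odd n := by simpa using he
      have hm := Nat.even_iff.mp he
      have h2 : 2 * g k n = n := by unfold g; rw [if_pos hm]; omega
      simp only [he, hne, if_true, if_false, zero_add]
      have hsum : ∑ i ∈ (Finset.range t).filter (fun i => Odd ((g k)^[i] (g k n))),
            3 ^ ((Finset.Ioo i t).filter (fun j => Odd ((g k)^[j] (g k n)))).card *
            2 ^ (1 + ((Finset.range i).filter (fun j => Even ((g k)^[j] (g k n)))).card)
          = 2 * ∑ i ∈ (Finset.range t).filter (fun i => Odd ((g k)^[i] (g k n))),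
            3 ^ ((Finset.Ioo i t).filter (fun j => Odd ((g k)^[j] (g k n)))).card *
            2 ^ ((Finset.range i).filter (fun j => Even ((g k)^[j] (g k n)))).card := by
        rw [Finset.mul_sum]
        exact Finset.sum_congr rfl fun i _ => by ring
      erw [hsum]
      have final : ∀ A S m : ℕ, 2 ^ t * 3 ^ k = 2 ^ m * (3 ^ m * A + 3 ^ k * S) →
          2 * A = n →
          2 ^ (t + 1) * 3 ^ k = 2 ^ m * (3 ^ m * n + 3 ^ k * (2 * S)) := by
        intro A S m h1 h2
        rw [← h2, show 2 ^ (t+1) * 3 ^ k = 2 * (2 ^ t * 3 ^ k) by ring, h1]; ring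
      exact final _ _ _ H h2
    · have hne : ¬ Even n := by simpa using ho
      have hm := Nat.odd_iff.mp ho
      have hg : g k n = 3 * n + 3 ^ k := by unfold g; rw [if_neg (by omega)]
      simp only [ho, hne, if_true, if_false, zero_add]
      have final : ∀ A S m : ℕ, 2 ^ t * 3 ^ k = 2 ^ m * (3 ^ m * A + 3 ^ k * S) →
          A = 3 * n + 3 ^ k →
          2 ^ (t + 1) * 3 ^ k = 2 ^ (1 + m) * (3 ^ (1 + m) * n + 3 ^ k * (3 ^ m + S)) := by
        intro A S m h1 h2
        rw [h2] at h1
        rw [show 2 ^ (t+1) * 3 ^ k = 2 * (2 ^ t * 3 ^ k) by ring, h1]; ring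
      exact final _ _ _ H hg
end

section
/- If two positive integers n₁ and n₂ have the same total stopping time t in the 3n+3^k sequence (i.e., g_k^t(n₁) = 3^k = g_k^t(n₂)), then 2^{m₁}(3^{m₁}·n₁ + 3^k·S₁) = 2^{m₂}(3^{m₂}·n₂ + 3^k·S₂), where for a = 1, 2, m_a = #{i : 0 ≤ i < t and g_k^i(n_a) is odd} and S_a = Σ_{i < t, g_k^i(n_a) odd} 3^{o_i} · 2^{e_i} with o_i = #{j : i < j < t and g_k^j(n_a) is odd} and e_i = #{j : 0 ≤ j < i and g_k^j(n_a) is even}. -/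
open Finset

lemma g_of_odd (k m : ℕ) (h : Odd m) : g k m = 3 * m + 3 ^ k := by
  rw [Nat.odd_iff] at h
  simp only [g]
  rw [if_neg (by omega)]

lemma g_of_even (k m : ℕ) (h : Even m) : g k m = m / 2 := by
  rw [Nat.even_iff] at h
  simp only [g]
  rw [if_pos h]

lemma key_invariant (k n : ℕ) : ∀ t : ℕ,
    2 ^ ((Finset.range t).filter (fun i => Even ((g k)^[i] n))).card * (g k)^[t] n =
    3 ^ ((Finset.range t).filter (fun i => Odd ((g k)^[i] n))).card * n +
      3 ^ k * ∑ i ∈ (Finset.range t).filter (fun i => Odd ((g k)^[i] n)),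
        3 ^ ((Finset.Ioo i t).filter (fun j => Odd ((g k)^[j] n))).card *
        2 ^ ((Finset.range i).filter (fun j => Even ((g k)^[j] n))).card
  | 0 => by simp
  | (t + 1) => by
    have ih := key_invariant k n t
    rw [Function.iterate_succ_apply', Finset.range_add_one]
    by_cases h : Odd ((g k)^[t] n)
    · have hne : ¬ Even ((g k)^[t] n) := by simpa [Nat.not_even_iff_odd] using h
      rw [g_of_odd k _ h, Finset.filter_insert, Finset.filter_insert, if_pos h, if_neg hne,
        Finset.card_insert_of_notMem (by simp), Finset.sum_insert (by simp)]
      have hsum : ∑ i ∈ (Finset.range t).filter (fun i => Odd ((g k)^[i] n)),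
          3 ^ ((Finset.Ioo i (t + 1)).filter (fun j => Odd ((g k)^[j] n))).card *
          2 ^ ((Finset.range i).filter (fun j => Even ((g k)^[j] n))).card
          = 3 * ∑ i ∈ (Finset.range t).filter (fun i => Odd ((g k)^[i] n)),
            3 ^ ((Finset.Ioo i t).filter (fun j => Odd ((g k)^[j] n))).card *
            2 ^ ((Finset.range i).filter (fun j => Even ((g k)^[j] n))).card := by
        rw [Finset.mul_sum]
        refine Finset.sum_congr rfl fun i hi => ?_
        have hit : i < t := by
          have := (Finset.mem_filter.mp hi).1
          simpa using this
        have hIoo : Finset.Ioo i (t + 1) = insert t (Finset.Ioo i t) := by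
          rw [Finset.Ioo_insert_right hit]
          ext x
          simp only [Finset.mem_Ioo, Finset.mem_Ioc]
          omega
        rw [hIoo, Finset.filter_insert, if_pos h,
          Finset.card_insert_of_notMem (by simp), pow_succ]
        ring
      rw [hsum]
      have hIoo0 : Finset.Ioo t (t + 1) = (∅ : Finset ℕ) := by
        ext x; simp only [Finset.mem_Ioo, Finset.notMem_empty, iff_false]; omega
      rw [hIoo0]
      simp only [Finset.filter_empty, Finset.card_empty, pow_zero, one_mul, pow_succ]
      have expand : 2 ^ ((Finset.range t).filter (fun i => Even ((g k)^[i] n))).card *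
          (3 * (g k)^[t] n + 3 ^ k) =
          3 * (2 ^ ((Finset.range t).filter (fun i => Even ((g k)^[i] n))).card *
            (g k)^[t] n) +
          3 ^ k * 2 ^ ((Finset.range t).filter (fun i => Even ((g k)^[i] n))).card := by
        ring
      rw [expand, ih]
      ring
    · have he : Even ((g k)^[t] n) := Nat.not_odd_iff_even.mp h
      rw [g_of_even k _ he, Finset.filter_insert, Finset.filter_insert, if_neg h, if_pos he,
        Finset.card_insert_of_notMem (by simp)]
      have hsum : ∑ i ∈ (Finset.range t).filter (fun i => Odd ((g k)^[i] n)),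
          3 ^ ((Finset.Ioo i (t + 1)).filter (fun j => Odd ((g k)^[j] n))).card *
          2 ^ ((Finset.range i).filter (fun j => Even ((g k)^[j] n))).card
          = ∑ i ∈ (Finset.range t).filter (fun i => Odd ((g k)^[i] n)),
            3 ^ ((Finset.Ioo i t).filter (fun j => Odd ((g k)^[j] n))).card *
            2 ^ ((Finset.range i).filter (fun j => Even ((g k)^[j] n))).card := by
        refine Finset.sum_congr rfl fun i hi => ?_
        have hit : i < t := by
          have := (Finset.mem_filter.mp hi).1
          simpa using this
        have hIoo : Finset.Ioo i (t + 1) = insert t (Finset.Ioo i t) := by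
          rw [Finset.Ioo_insert_right hit]
          ext x
          simp only [Finset.mem_Ioo, Finset.mem_Ioc]
          omega
        rw [hIoo, Finset.filter_insert, if_neg h]
      rw [hsum, pow_succ]
      have h2 : 2 * ((g k)^[t] n / 2) = (g k)^[t] n := by
        rw [Nat.even_iff] at he
        omega
      calc 2 ^ ((Finset.range t).filter (fun i => Even ((g k)^[i] n))).card * 2 *
            ((g k)^[t] n / 2)
          = 2 ^ ((Finset.range t).filter (fun i => Even ((g k)^[i] n))).card *
            (2 * ((g k)^[t] n / 2)) := by ring
        _ = _ := by rw [h2, ih]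

lemma both_sides (k n t : ℕ) (ht : (g k)^[t] n = 3 ^ k) :
    2 ^ ((Finset.range t).filter (fun i => Odd ((g k)^[i] n))).card *
      (3 ^ ((Finset.range t).filter (fun i => Odd ((g k)^[i] n))).card * n +
       3 ^ k * ∑ i ∈ (Finset.range t).filter (fun i => Odd ((g k)^[i] n)),
         3 ^ ((Finset.Ioo i t).filter (fun j => Odd ((g k)^[j] n))).card *
         2 ^ ((Finset.range i).filter (fun j => Even ((g k)^[j] n))).card)
    = 2 ^ t * 3 ^ k := by
  have hkey := key_invariant k n t
  rw [ht] at hkey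
  rw [← hkey, ← mul_assoc, ← pow_add]
  have hcard : ((Finset.range t).filter (fun i => Odd ((g k)^[i] n))).card +
      ((Finset.range t).filter (fun i => Even ((g k)^[i] n))).card = t := by
    have heq : (Finset.range t).filter (fun i => Even ((g k)^[i] n)) =
        (Finset.range t).filter (fun i => ¬ Odd ((g k)^[i] n)) := by
      apply Finset.filter_congr
      intro i _
      simp [Nat.not_odd_iff_even]
    rw [heq, Finset.card_filter_add_card_filter_not, Finset.card_range]
  rw [hcard]

theorem same_total_stopping_time (k n₁ n₂ t : ℕ) (hn₁ : 0 < n₁) (hn₂ : 0 < n₂)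
    (ht₁ : (g k)^[t] n₁ = 3 ^ k) (ht₂ : (g k)^[t] n₂ = 3 ^ k) :
    2 ^ ((Finset.range t).filter (fun i => Odd ((g k)^[i] n₁))).card *
      (3 ^ ((Finset.range t).filter (fun i => Odd ((g k)^[i] n₁))).card * n₁ +
       3 ^ k * ∑ i ∈ (Finset.range t).filter (fun i => Odd ((g k)^[i] n₁)),
         3 ^ ((Finset.Ioo i t).filter (fun j => Odd ((g k)^[j] n₁))).card *
         2 ^ ((Finset.range i).filter (fun j => Even ((g k)^[j] n₁))).card) =
    2 ^ ((Finset.range t).filter (fun i => Odd ((g k)^[i] n₂))).card *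
      (3 ^ ((Finset.range t).filter (fun i => Odd ((g k)^[i] n₂))).card * n₂ +
       3 ^ k * ∑ i ∈ (Finset.range t).filter (fun i => Odd ((g k)^[i] n₂)),
         3 ^ ((Finset.Ioo i t).filter (fun j => Odd ((g k)^[j] n₂))).card *
         2 ^ ((Finset.range i).filter (fun j => Even ((g k)^[j] n₂))).card) := by
  rw [both_sides k n₁ t ht₁, both_sides k n₂ t ht₂]
end
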